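/- There is an exponential gap between node-averaged and slowest-node complexity: there exists a distributed problem (leader election on cycles) whose slowest-node deterministic complexity on $n$-node cycles is $\Theta(n)$ while its node-averaged deterministic complexity is $O(\log n)$. -/
import Mathlib


/-- Running time of node `v` on the `n`-cycle under the grow-until-dominated algorithm:
the least radius `k` at which `v` either sees a larger identifier or sees the whole
cycle. -/
noncomputable def cycleRuntime (n : ℕ) (I : ZMod n → ℕ) (v : ZMod n) : ℕ :=
  sInf {k | (∃ u : ZMod n, (∃ j : ℤ, |j| ≤ (k : ℤ) ∧ u = v + (j : ZMod n)) ∧ I v < I u) ∨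
    (n + 1) / 2 ≤ k}


lemma val_intCast_eq_or {n : ℕ} [NeZero n] (j : ℤ) (hj : |j| < (n : ℤ)) :
    (((j : ZMod n)).val : ℤ) = j ∨ (((j : ZMod n)).val : ℤ) = j + n := by
  have h := ZMod.val_intCast (n := n) j
  rcases le_or_gt 0 j with h0 | h0
  · left; rw [h, Int.emod_eq_of_lt h0 (by rw [abs_of_nonneg h0] at hj; exact hj)]
  · right
    have : j % (n:ℤ) = (j + n) % n := by
      conv_rhs => rw [show j + (n:ℤ) = j + (n:ℤ) * 1 by ring, Int.add_mul_emod_self_left]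
    rw [h, this, Int.emod_eq_of_lt (by rw [abs_of_neg h0] at hj; omega) (by omega)]

theorem lowerBound (n : ℕ) (hn : 3 ≤ n) :
    ¬ ∃ (k : ℕ) (out : (ZMod n → ℕ) → ZMod n → Bool),
        k < n / 4 ∧
        (∀ (I I' : ZMod n → ℕ) (v v' : ZMod n),
          (∀ j : ℤ, |j| ≤ (k : ℤ) → I (v + (j : ZMod n)) = I' (v' + (j : ZMod n))) →
          out I v = out I' v') ∧
        (∀ I : ZMod n → ℕ, Function.Injective I → (∀ x, I x < n ^ 3) →
          ∃! v : ZMod n, out I v = true) := by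
  rintro ⟨k, out, hk, hloc, hsolve⟩
  haveI : NeZero n := ⟨by omega⟩
  set m : ℕ := n / 2 with hm
  have hk4 : 4 * k + 4 ≤ n := by omega
  have hmk : 2 * k < m ∧ m + 2 * k < n ∧ 1 ≤ m ∧ m + k < n := by omega
  have h3n : 3 * n ≤ n ^ 3 := by
    have h : n ^ 3 = n * n * n := by ring
    nlinarith
  -- identifier assignments A and B
  set A : ZMod n → ℕ := fun x => x.val with hA
  set B : ZMod n → ℕ := fun x => x.val + n with hB
  have hvlt : ∀ x : ZMod n, x.val < n := fun x => ZMod.val_lt x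
  have hAinj : Function.Injective A := ZMod.val_injective n
  have hBinj : Function.Injective B := fun x y h => ZMod.val_injective n (by simpa [hB] using h)
  obtain ⟨a, ha, -⟩ := hsolve A hAinj (fun x => by have := hvlt x; simp only [hA]; omega)
  obtain ⟨b, hb, -⟩ := hsolve B hBinj (fun x => by have := hvlt x; simp only [hB]; omega)
  -- the glued assignment C
  set C : ZMod n → ℕ := fun x =>
    if x.val ≤ k ∨ n - k ≤ x.val then (a + x).val
    else if m - k ≤ x.val ∧ x.val ≤ m + k then (b + (x - (m : ZMod n))).val + n
    else 2 * n + x.val with hC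
  have hCinj : Function.Injective C := by
    intro x y h
    simp only [hC] at h
    split_ifs at h with h1 h2 h2 h3 h3 h4 h4
    · exact add_left_cancel (ZMod.val_injective n h)
    · have := hvlt (a + x); have := hvlt (b + (y - (m:ZMod n))); omega
    · have := hvlt (a + x); omega
    · have := hvlt (a + y); have := hvlt (b + (x - (m:ZMod n))); omega
    · have h' : b + (x - (m:ZMod n)) = b + (y - (m:ZMod n)) := ZMod.val_injective n (by omega)
      have := add_left_cancel h'
      exact sub_left_injective this
    · have := hvlt (b + (x - (m:ZMod n))); omega
    · have := hvlt (a + y); omega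
    · have := hvlt (b + (y - (m:ZMod n))); omega
    · exact ZMod.val_injective n (by omega)
  have hClt : ∀ x, C x < n ^ 3 := by
    intro x
    simp only [hC]
    split_ifs
    · have := hvlt (a + x); omega
    · have := hvlt (b + (x - (m:ZMod n))); omega
    · have := hvlt x; omega
  obtain ⟨c, -, hcuniq⟩ := hsolve C hCinj hClt
  -- window at 0 matches A around a
  have hwin0 : ∀ j : ℤ, |j| ≤ (k : ℤ) → A (a + (j : ZMod n)) = C ((0 : ZMod n) + (j : ZMod n)) := by
    intro j hj
    rw [zero_add]
    have hjn : |j| < (n : ℤ) := lt_of_le_of_lt hj (by exact_mod_cast by omega)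
    have hcond : ((j : ZMod n)).val ≤ k ∨ n - k ≤ ((j : ZMod n)).val := by
      rcases val_intCast_eq_or j hjn with h | h
      · left
        have := abs_le.1 hj
        omega
      · right
        have := abs_le.1 hj
        omega
    simp only [hC, if_pos hcond, hA]
  -- window at m matches B around b
  have hwinm : ∀ j : ℤ, |j| ≤ (k : ℤ) → B (b + (j : ZMod n)) = C (((m : ℕ) : ZMod n) + (j : ZMod n)) := by
    intro j hj
    have hj' := abs_le.1 hj
    set x : ZMod n := ((m : ℕ) : ZMod n) + (j : ZMod n) with hx
    have hxcast : x = (((m : ℤ) + j : ℤ) : ZMod n) := by push_cast [hx]; ring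
    have habs : |(m : ℤ) + j| < (n : ℤ) := by rw [abs_lt]; constructor <;> [omega; omega]
    have hxval : (x.val : ℤ) = (m : ℤ) + j := by
      rcases val_intCast_eq_or ((m : ℤ) + j) habs with h | h
      · rw [hxcast]; exact h
      · exfalso
        have := hvlt x
        rw [hxcast] at *
        omega
    have hcond1 : ¬ (x.val ≤ k ∨ n - k ≤ x.val) := by omega
    have hcond2 : m - k ≤ x.val ∧ x.val ≤ m + k := by omega
    have hxsub : x - ((m : ℕ) : ZMod n) = (j : ZMod n) := by rw [hx]; ring
    simp only [hC, if_neg hcond1, if_pos hcond2, hxsub, hB]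
  have h0 : out C 0 = true := by rw [← hloc A C a 0 hwin0]; exact ha
  have h1 : out C ((m : ℕ) : ZMod n) = true := by rw [← hloc B C b ((m:ℕ):ZMod n) hwinm]; exact hb
  have := (hcuniq 0 h0).trans (hcuniq ((m:ℕ):ZMod n) h1).symm
  have hmval : (((m : ℕ) : ZMod n)).val = m := ZMod.val_cast_of_lt (by omega)
  rw [← this] at hmval
  simp [ZMod.val_zero] at hmval
  omega



theorem upperBound' (n : ℕ) (hn : 3 ≤ n) (I : ZMod n → ℕ) (hI : Function.Injective I) :
      (∃! v : ZMod n, ∀ u : ZMod n, I u ≤ I v) ∧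
      (1 / (n : ℝ)) * ∑ v : Fin n, (cycleRuntime n I ((v : ℕ) : ZMod n) : ℝ) ≤ 2 * Real.log n := by
  haveI : NeZero n := ⟨by omega⟩
  constructor
  · obtain ⟨v, hv⟩ := Finite.exists_max I
    exact ⟨v, hv, fun v' hv' => hI (le_antisymm (hv v') (hv' v))⟩
  set M : ℕ := (n + 1) / 2 with hM
  set r : ZMod n → ℕ := cycleRuntime n I with hr
  have hMn : M ≤ n ∧ 1 ≤ M := by omega
  have hrle : ∀ v, r v ≤ M := fun v => Nat.sInf_le (Or.inr le_rfl)
  have hkey : ∀ (k : ℕ) (v : ZMod n), k < r v →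
      (∀ j : ℤ, |j| ≤ (k : ℤ) → ¬ I v < I (v + (j : ZMod n))) := by
    intro k v hkv j hj hlt
    have hmem : k ∈ {k : ℕ | (∃ u : ZMod n, (∃ j : ℤ, |j| ≤ (k : ℤ) ∧ u = v + (j : ZMod n)) ∧
        I v < I u) ∨ (n + 1) / 2 ≤ k} := Or.inl ⟨v + (j : ZMod n), ⟨j, hj, rfl⟩, hlt⟩
    exact absurd (Nat.sInf_le hmem) (not_le.2 hkv)
  set T : ℕ → Finset (ZMod n) := fun k => Finset.univ.filter (fun v => k < r v) with hT
  have hcount : ∀ k < M, (T k).card * (k + 1) ≤ n := by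
    intro k hkM
    have hinj : Function.Injective
        (fun p : (T k) × Fin (k + 1) => (p.1 : ZMod n) + ((p.2 : ℕ) : ZMod n)) := by
      rintro ⟨⟨v, hv⟩, i⟩ ⟨⟨v', hv'⟩, i'⟩ h
      simp only at h
      have hv2 : k < r v := by simpa [hT] using hv
      have hv'2 : k < r v' := by simpa [hT] using hv'
      have hvv' : v = v' := by
        by_contra hne
        have e1 : v = v' + (Int.cast ((i' : ℤ) - (i : ℤ)) : ZMod n) := by
          push_cast
          linear_combination h
        have e2 : v' = v + (Int.cast ((i : ℤ) - (i' : ℤ)) : ZMod n) := by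
          push_cast
          linear_combination -h
        have habs1 : |(i' : ℤ) - (i : ℤ)| ≤ (k : ℤ) := by
          have := i.isLt; have := i'.isLt; rw [abs_le]; omega
        have habs2 : |(i : ℤ) - (i' : ℤ)| ≤ (k : ℤ) := by
          have := i.isLt; have := i'.isLt; rw [abs_le]; omega
        have h1 := hkey k v' hv'2 _ habs1
        rw [← e1] at h1
        have h2 := hkey k v hv2 _ habs2
        rw [← e2] at h2
        exact hne (hI (le_antisymm (not_lt.1 h1) (not_lt.1 h2)))
      subst hvv'
      have hcasteq : ((i : ℕ) : ZMod n) = ((i' : ℕ) : ZMod n) := add_left_cancel h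
      have hii : (i : ℕ) = (i' : ℕ) := by
        rw [← ZMod.val_cast_of_lt (show (i : ℕ) < n by omega),
          ← ZMod.val_cast_of_lt (show (i' : ℕ) < n by omega), hcasteq]
      exact Prod.ext (Subtype.ext rfl) (Fin.ext hii)
    have := Fintype.card_le_of_injective _ hinj
    simpa [ZMod.card] using this
  have hfilt : ∀ v : ZMod n, ((Finset.range M).filter (fun k => k < r v)).card = r v := by
    intro v
    have : (Finset.range M).filter (fun k => k < r v) = Finset.range (r v) := by
      ext x
      simp only [Finset.mem_filter, Finset.mem_range]
      have := hrle v; omega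
    rw [this, Finset.card_range]
  have hsum : ∑ v : ZMod n, r v = ∑ k ∈ Finset.range M, (T k).card := by
    calc ∑ v : ZMod n, r v
        = ∑ v : ZMod n, ((Finset.range M).filter (fun k => k < r v)).card :=
          Finset.sum_congr rfl (fun v _ => (hfilt v).symm)
      _ = ∑ v : ZMod n, ∑ k ∈ Finset.range M, if k < r v then 1 else 0 :=
          Finset.sum_congr rfl (fun v _ => Finset.card_filter _ _)
      _ = ∑ k ∈ Finset.range M, ∑ v : ZMod n, if k < r v then 1 else 0 := Finset.sum_comm
      _ = ∑ k ∈ Finset.range M, (T k).card :=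
          Finset.sum_congr rfl (fun k _ => (Finset.card_filter _ _).symm)
  have hbij : ∑ v : Fin n, (r ((v : ℕ) : ZMod n) : ℝ) = ∑ v : ZMod n, (r v : ℝ) := by
    have hb : Function.Bijective (fun v : Fin n => ((v : ℕ) : ZMod n)) := by
      rw [Fintype.bijective_iff_injective_and_card]
      refine ⟨fun x y hxy => ?_, by simp [ZMod.card]⟩
      have hval : (((x : ℕ) : ZMod n)).val = (((y : ℕ) : ZMod n)).val := by
        simp only at hxy
        rw [hxy]
      rw [ZMod.val_cast_of_lt x.isLt, ZMod.val_cast_of_lt y.isLt] at hval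
      exact Fin.ext hval
    exact Fintype.sum_bijective _ hb _ _ (fun _ => rfl)
  have hreal : ∑ v : ZMod n, (r v : ℝ) ≤ (n : ℝ) * (1 + Real.log M) := by
    have hcast : ∑ v : ZMod n, (r v : ℝ) = ((∑ v : ZMod n, r v : ℕ) : ℝ) := by push_cast; rfl
    rw [hcast, hsum]
    push_cast
    calc ∑ k ∈ Finset.range M, ((T k).card : ℝ)
        ≤ ∑ k ∈ Finset.range M, (n : ℝ) / ((k : ℝ) + 1) := by
          apply Finset.sum_le_sum
          intro k hk
          rw [le_div_iff₀ (by positivity)]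
          exact_mod_cast hcount k (Finset.mem_range.1 hk)
      _ = (n : ℝ) * ∑ k ∈ Finset.range M, ((k : ℝ) + 1)⁻¹ := by
          rw [Finset.mul_sum]
          exact Finset.sum_congr rfl (fun k _ => by ring)
      _ = (n : ℝ) * (harmonic M : ℝ) := by
          congr 1
          rw [harmonic]
          push_cast
          rfl
      _ ≤ (n : ℝ) * (1 + Real.log M) :=
          mul_le_mul_of_nonneg_left (harmonic_le_one_add_log M) (by positivity)
  have hn0 : (0 : ℝ) < n := by positivity
  have hlogM : Real.log M ≤ Real.log n := by
    apply Real.log_le_log (by exact_mod_cast hMn.2)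
    exact_mod_cast hMn.1
  have hlog1 : 1 ≤ Real.log n := by
    rw [Real.le_log_iff_exp_le hn0]
    calc Real.exp 1 ≤ 2.7182818286 := Real.exp_one_lt_d9.le
      _ ≤ 3 := by norm_num
      _ ≤ (n : ℝ) := by exact_mod_cast hn
  rw [hbij]
  calc (1 / (n : ℝ)) * ∑ v : ZMod n, (r v : ℝ)
      ≤ (1 / (n : ℝ)) * ((n : ℝ) * (1 + Real.log M)) :=
        mul_le_mul_of_nonneg_left hreal (by positivity)
    _ = 1 + Real.log M := by field_simp
    _ ≤ Real.log n + Real.log n := add_le_add hlog1 hlogM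
    _ = 2 * Real.log n := by ring


/-- Exponential gap between node-averaged and slowest-node complexity, witnessed by
leader election on cycles: (i) every local algorithm solving leader election on
`n`-cycles has a node of running time at least `n/4` (so the slowest-node complexity is
`Θ(n)`), while (ii) the grow-until-dominated algorithm solves leader election with
node-averaged running time `O(log n)`. -/
theorem stmt_15 :
    (∀ n : ℕ, 3 ≤ n →
      ¬ ∃ (k : ℕ) (out : (ZMod n → ℕ) → ZMod n → Bool),
        k < n / 4 ∧
        (∀ (I I' : ZMod n → ℕ) (v v' : ZMod n),
          (∀ j : ℤ, |j| ≤ (k : ℤ) → I (v + (j : ZMod n)) = I' (v' + (j : ZMod n))) →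
          out I v = out I' v') ∧
        (∀ I : ZMod n → ℕ, Function.Injective I → (∀ x, I x < n ^ 3) →
          ∃! v : ZMod n, out I v = true)) ∧
    (∃ C : ℝ, 0 < C ∧ ∀ n : ℕ, 3 ≤ n → ∀ I : ZMod n → ℕ, Function.Injective I →
      (∃! v : ZMod n, ∀ u : ZMod n, I u ≤ I v) ∧
      (1 / (n : ℝ)) * ∑ v : Fin n, (cycleRuntime n I ((v : ℕ) : ZMod n) : ℝ) ≤ C * Real.log n) := by
  exact ⟨fun n hn => lowerBound n hn, 2, by norm_num, fun n hn I hI => (upperBound' n hn I hI)⟩
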